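/- Theorem 1 (TIW-DSM equals score matching up to a constant). For every pair of measurable time-dependent vector fields s₁, s₂ : ℝ^d × (0,T] → ℝ^d for which all integrals below are finite, (1/2)∫₀ᵀ λ(t) ∫ r_t(x) ‖s₁(x,t) − ∇ log r_t(x)‖² dx dt − (1/2)∫₀ᵀ λ(t) ∫ r_t(x) ‖s₂(x,t) − ∇ log r_t(x)‖² dx dt = (1/2)∫₀ᵀ λ(t) ∫∫ p_bias(x₀) k_t(x,x₀) w_t(x) ‖s₁(x,t) − ∇ log k_t(x,x₀) − ∇ log w_t(x)‖² dx dx₀ dt − (1/2)∫₀ᵀ λ(t) ∫∫ p_bias(x₀) k_t(x,x₀) w_t(x) ‖s₂(x,t) − ∇ log k_t(x,x₀) − ∇ log w_t(x)‖² dx dx₀ dt. In other words, the time-dependent importance-reweighted denoising score-matching objective L_TIW-DSM(s; p_bias, w_t) and the score-matching objective L_SM(s; p_data) differ by a constant that does not depend on the vector field s. -/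

import Mathlib

open MeasureTheory InnerProductSpace Filter Topology
section keysec
variable {F : Type*} [NormedAddCommGroup F] [InnerProductSpace ℝ F] [CompleteSpace F]

lemma hasGradientAt_log' {f : F → ℝ} {g x : F} (hf : HasGradientAt f g x) (hfx : f x ≠ 0) :
    HasGradientAt (fun y => Real.log (f y)) ((f x)⁻¹ • g) x := by
  have h1 : HasFDerivAt f (toDual ℝ F g) x := hf.hasFDerivAt
  have h2 := (Real.hasDerivAt_log hfx).comp_hasFDerivAt x h1
  rw [hasGradientAt_iff_hasFDerivAt, _root_.map_smul]
  exact h2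

lemma gradient_log' {f : F → ℝ} {x : F} (hf : DifferentiableAt ℝ f x) (hfx : f x ≠ 0) :
    gradient (fun y => Real.log (f y)) x = (f x)⁻¹ • gradient f x :=
  (hasGradientAt_log' hf.hasGradientAt hfx).gradient

lemma hasGradientAt_mul' {f g : F → ℝ} {gf gg : F} {x : F}
    (hf : HasGradientAt f gf x) (hg : HasGradientAt g gg x) :
    HasGradientAt (fun y => f y * g y) (f x • gg + g x • gf) x := by
  have h := hf.hasFDerivAt.mul hg.hasFDerivAt
  rw [hasGradientAt_iff_hasFDerivAt, map_add, _root_.map_smul, _root_.map_smul]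
  exact h

omit [CompleteSpace F] in
lemma alg1' (s₁ s₂ u G : F) (β κ W : ℝ) (hκ : κ ≠ 0) :
    β * κ * W * ‖s₁ - κ⁻¹ • G - u‖ ^ 2 - β * κ * W * ‖s₂ - κ⁻¹ • G - u‖ ^ 2
      = (β * κ) * (W * (‖s₁ - u‖ ^ 2 - ‖s₂ - u‖ ^ 2))
        - (2 * W) * (β * (inner ℝ (s₁ - s₂) G : ℝ)) := by
  have e1 : s₁ - κ⁻¹ • G - u = (s₁ - u) - κ⁻¹ • G := by abel
  have e2 : s₂ - κ⁻¹ • G - u = (s₂ - u) - κ⁻¹ • G := by abel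
  rw [e1, e2]
  simp only [norm_sub_sq_real, inner_sub_left, real_inner_smul_right]
  field_simp
  ring

omit [CompleteSpace F] in
lemma alg2' (s₁ s₂ gq gw : F) (Q W : ℝ) (hQ : Q ≠ 0) (hW : W ≠ 0) :
    (Q * W) * ‖s₁ - (Q * W)⁻¹ • (Q • gw + W • gq)‖ ^ 2
      - (Q * W) * ‖s₂ - (Q * W)⁻¹ • (Q • gw + W • gq)‖ ^ 2
      = Q * (W * (‖s₁ - W⁻¹ • gw‖ ^ 2 - ‖s₂ - W⁻¹ • gw‖ ^ 2))
        - (2 * W) * (inner ℝ (s₁ - s₂) gq : ℝ) := by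
  simp only [norm_sub_sq_real, inner_sub_left, inner_add_right, real_inner_smul_right, norm_smul,
    mul_pow, sq_abs, norm_add_sq_real, real_inner_smul_left, inner_smul_right]
  field_simp
  ring
end keysec

lemma fderiv_param_measurable {d : ℕ} {α : Type*} [MeasurableSpace α]
    (f : EuclideanSpace ℝ (Fin d) → α → ℝ)
    (hmeas : ∀ z, Measurable (f z))
    (hdiff : ∀ a, Differentiable ℝ (fun y => f y a))
    (x v : EuclideanSpace ℝ (Fin d)) :
    Measurable (fun a => fderiv ℝ (fun y => f y a) x v) := by
  set u : ℕ → ℝ := fun n => 1 / (n + 1) with hu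
  have hu0 : ∀ n, u n ≠ 0 := by
    intro n
    simp [hu]
    positivity
  have hulim : Tendsto u atTop (𝓝[≠] (0:ℝ)) := by
    refine tendsto_nhdsWithin_of_tendsto_nhds_of_eventually_within _
      tendsto_one_div_add_atTop_nhds_zero_nat ?_
    exact Filter.Eventually.of_forall fun n => hu0 n
  set q : ℕ → α → ℝ := fun n a => (u n)⁻¹ * (f (x + u n • v) a - f x a) with hq
  have hqmeas : ∀ n, Measurable (q n) := fun n =>
    (((hmeas _).sub (hmeas x)).const_mul _)
  apply measurable_of_tendsto_metrizable hqmeas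
  rw [tendsto_pi_nhds]
  intro a
  have hline : HasDerivAt (fun h : ℝ => x + h • v) v 0 := by
    simpa using (((hasDerivAt_id (0:ℝ)).smul_const v).const_add x)
  have hx0 : x + (0:ℝ) • v = x := by simp
  have hfd : HasFDerivAt (fun y => f y a) (fderiv ℝ (fun y => f y a) x) (x + (0:ℝ) • v) := by
    rw [hx0]; exact (hdiff a x).hasFDerivAt
  have hφ : HasDerivAt (fun h : ℝ => f (x + h • v) a) (fderiv ℝ (fun y => f y a) x v) 0 :=
    HasFDerivAt.comp_hasDerivAt (l := fun y => f y a) (f := fun h : ℝ => x + h • v) 0 hfd hline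
  have := (hasDerivAt_iff_tendsto_slope.mp hφ).comp hulim
  convert this using 2 with n
  simp [hq, slope, hx0, div_eq_inv_mul]

lemma gradient_param_measurable {d : ℕ} {α : Type*} [MeasurableSpace α]
    (f : EuclideanSpace ℝ (Fin d) → α → ℝ)
    (hmeas : ∀ z, Measurable (f z))
    (hdiff : ∀ a, Differentiable ℝ (fun y => f y a))
    (x : EuclideanSpace ℝ (Fin d)) :
    Measurable (fun a => gradient (fun y => f y a) x) := by
  have hcoord : ∀ (a : α) (i : Fin d),
      gradient (fun y => f y a) x i
        = fderiv ℝ (fun y => f y a) x (EuclideanSpace.single i (1:ℝ)) := by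
    intro a i
    have h1 : HasFDerivAt (fun y => f y a)
        (toDual ℝ (EuclideanSpace ℝ (Fin d)) (gradient (fun y => f y a) x)) x :=
      hasGradientAt_iff_hasFDerivAt.mp (hdiff a x).hasGradientAt
    rw [h1.fderiv]
    rw [toDual_apply_apply, real_inner_comm, EuclideanSpace.inner_single_left]
    simp
  refine (MeasurableEquiv.toLp 2 (Fin d → ℝ)).measurable.comp (f := fun a => (gradient (fun y => f y a) x).ofLp) ?_
  apply measurable_pi_iff.mpr
  intro i
  have : (fun a => gradient (fun y => f y a) x i)
      = fun a => fderiv ℝ (fun y => f y a) x (EuclideanSpace.single i (1:ℝ)) :=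
    funext fun a => hcoord a i
  rw [this]
  exact fderiv_param_measurable f hmeas hdiff x _

lemma tiw_key {d : ℕ}
    (pbias : EuclideanSpace ℝ (Fin d) → ℝ)
    (hpbias_meas : Measurable pbias) (hpbias_pos : ∀ x₀, 0 < pbias x₀)
    (k : EuclideanSpace ℝ (Fin d) → EuclideanSpace ℝ (Fin d) → ℝ)
    (hk_meas : Measurable (Function.uncurry k))
    (hk_pos : ∀ x₀ x, 0 < k x x₀)
    (hk_smooth : ∀ x₀, ContDiff ℝ 1 fun x => k x x₀)
    (q r : EuclideanSpace ℝ (Fin d) → ℝ)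
    (hq_def : ∀ x, q x = ∫ x₀, pbias x₀ * k x x₀)
    (hq_pos : ∀ x, 0 < q x)
    (hq_diff : Differentiable ℝ q)
    (hq_grad : ∀ x, gradient q x = ∫ x₀, pbias x₀ • gradient (fun y => k y x₀) x)
    (hr_pos : ∀ x, 0 < r x)
    (hr_diff : Differentiable ℝ r)
    (w : EuclideanSpace ℝ (Fin d) → ℝ) (hw_def : ∀ x, w x = r x / q x)
    (s₁ s₂ : EuclideanSpace ℝ (Fin d) → EuclideanSpace ℝ (Fin d))
    (hint_sm₁ : Integrable fun x =>
      r x * ‖s₁ x - gradient (fun y => Real.log (r y)) x‖ ^ 2)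
    (hint_sm₂ : Integrable fun x =>
      r x * ‖s₂ x - gradient (fun y => Real.log (r y)) x‖ ^ 2)
    (hint_dsm₁ : Integrable fun p :
        EuclideanSpace ℝ (Fin d) × EuclideanSpace ℝ (Fin d) =>
      pbias p.2 * k p.1 p.2 * w p.1 *
        ‖s₁ p.1 - gradient (fun y => Real.log (k y p.2)) p.1
          - gradient (fun y => Real.log (w y)) p.1‖ ^ 2)
    (hint_dsm₂ : Integrable fun p :
        EuclideanSpace ℝ (Fin d) × EuclideanSpace ℝ (Fin d) =>
      pbias p.2 * k p.1 p.2 * w p.1 *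
        ‖s₂ p.1 - gradient (fun y => Real.log (k y p.2)) p.1
          - gradient (fun y => Real.log (w y)) p.1‖ ^ 2) :
    (∫ x, r x * ‖s₁ x - gradient (fun y => Real.log (r y)) x‖ ^ 2)
      - (∫ x, r x * ‖s₂ x - gradient (fun y => Real.log (r y)) x‖ ^ 2)
    = (∫ x₀, ∫ x, pbias x₀ * k x x₀ * w x *
        ‖s₁ x - gradient (fun y => Real.log (k y x₀)) x
          - gradient (fun y => Real.log (w y)) x‖ ^ 2)
      - (∫ x₀, ∫ x, pbias x₀ * k x x₀ * w x *
        ‖s₂ x - gradient (fun y => Real.log (k y x₀)) x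
          - gradient (fun y => Real.log (w y)) x‖ ^ 2) := by
  classical
  have hq0 : ∀ x, q x ≠ 0 := fun x => (hq_pos x).ne'
  have hw_pos : ∀ x, 0 < w x := fun x => by
    rw [hw_def]; exact div_pos (hr_pos x) (hq_pos x)
  have hw0 : ∀ x, w x ≠ 0 := fun x => (hw_pos x).ne'
  have hdiffk : ∀ x₀, Differentiable ℝ (fun y => k y x₀) := fun x₀ =>
    (hk_smooth x₀).differentiable one_ne_zero
  have hw_diff : Differentiable ℝ w := by
    have hw_eq : w = fun x => r x / q x := funext hw_def
    have : (fun x => r x / q x) = fun x => r x * (q x)⁻¹ := by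
      funext y; rw [div_eq_mul_inv]
    rw [hw_eq, this]
    exact fun x => (hr_diff x).mul ((hq_diff x).inv (hq0 x))
  have hrqw : ∀ y, r y = q y * w y := by
    intro y; rw [hw_def y, mul_comm, div_mul_cancel₀ _ (hq0 y)]
  have hgr : ∀ x, gradient r x = q x • gradient w x + w x • gradient q x := by
    intro x
    have h2 : r = fun y => q y * w y := funext hrqw
    rw [h2]
    exact (hasGradientAt_mul' (hq_diff x).hasGradientAt (hw_diff x).hasGradientAt).gradient
  have measK : ∀ x, Measurable (fun x₀ => k x x₀) := fun x =>
    hk_meas.comp measurable_prodMk_left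
  have measG : ∀ x, Measurable (fun x₀ => gradient (fun y => k y x₀) x) := fun x =>
    gradient_param_measurable k (fun z => hk_meas.comp measurable_prodMk_left) hdiffk x
  have IntK : ∀ x, Integrable (fun x₀ => pbias x₀ * k x x₀) := by
    intro x
    by_contra h
    exact (hq_pos x).ne' (by rw [hq_def x, integral_undef h])
  have hk_log : ∀ x x₀, gradient (fun y => Real.log (k y x₀)) x
      = (k x x₀)⁻¹ • gradient (fun y => k y x₀) x := fun x x₀ =>
    gradient_log' (hdiffk x₀ x) (hk_pos x₀ x).ne'
  have hw_log : ∀ x, gradient (fun y => Real.log (w y)) x = (w x)⁻¹ • gradient w x := fun x =>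
    gradient_log' (hw_diff x) (hw0 x)
  have hr_log : ∀ x, gradient (fun y => Real.log (r y)) x = (r x)⁻¹ • gradient r x := fun x =>
    gradient_log' (hr_diff x) (hr_pos x).ne'
  have hprod₁ : Integrable (fun p : EuclideanSpace ℝ (Fin d) × EuclideanSpace ℝ (Fin d) =>
      pbias p.2 * k p.1 p.2 * w p.1 *
        ‖s₁ p.1 - gradient (fun y => Real.log (k y p.2)) p.1
          - gradient (fun y => Real.log (w y)) p.1‖ ^ 2)
      ((volume : Measure (EuclideanSpace ℝ (Fin d))).prod volume) := hint_dsm₁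
  have hprod₂ : Integrable (fun p : EuclideanSpace ℝ (Fin d) × EuclideanSpace ℝ (Fin d) =>
      pbias p.2 * k p.1 p.2 * w p.1 *
        ‖s₂ p.1 - gradient (fun y => Real.log (k y p.2)) p.1
          - gradient (fun y => Real.log (w y)) p.1‖ ^ 2)
      ((volume : Measure (EuclideanSpace ℝ (Fin d))).prod volume) := hint_dsm₂
  have key : (fun x => ∫ x₀,
        (pbias x₀ * k x x₀ * w x *
          ‖s₁ x - gradient (fun y => Real.log (k y x₀)) x
            - gradient (fun y => Real.log (w y)) x‖ ^ 2
        - pbias x₀ * k x x₀ * w x *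
          ‖s₂ x - gradient (fun y => Real.log (k y x₀)) x
            - gradient (fun y => Real.log (w y)) x‖ ^ 2))
      =ᵐ[(volume : Measure (EuclideanSpace ℝ (Fin d)))]
      (fun x => r x * ‖s₁ x - gradient (fun y => Real.log (r y)) x‖ ^ 2
        - r x * ‖s₂ x - gradient (fun y => Real.log (r y)) x‖ ^ 2) := by
    filter_upwards [hprod₁.prod_right_ae, hprod₂.prod_right_ae] with x h1 h2
    have step1 : ∀ x₀,
        (pbias x₀ * k x x₀ * w x *
          ‖s₁ x - gradient (fun y => Real.log (k y x₀)) x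
            - gradient (fun y => Real.log (w y)) x‖ ^ 2
        - pbias x₀ * k x x₀ * w x *
          ‖s₂ x - gradient (fun y => Real.log (k y x₀)) x
            - gradient (fun y => Real.log (w y)) x‖ ^ 2)
        = (pbias x₀ * k x x₀) * (w x *
            (‖s₁ x - gradient (fun y => Real.log (w y)) x‖ ^ 2
              - ‖s₂ x - gradient (fun y => Real.log (w y)) x‖ ^ 2))
          - (2 * w x) * (pbias x₀ *
              (inner ℝ (s₁ x - s₂ x) (gradient (fun y => k y x₀) x) : ℝ)) := by
      intro x₀
      rw [hk_log x x₀]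
      exact alg1' (s₁ x) (s₂ x) (gradient (fun y => Real.log (w y)) x)
        (gradient (fun y => k y x₀) x) (pbias x₀) (k x x₀) (w x) (hk_pos x₀ x).ne'
    -- integrability of the squared-gradient-of-log-kernel term
    have hbound1 : ∀ x₀, ‖pbias x₀ * (‖gradient (fun y => k y x₀) x‖ ^ 2 / k x x₀)‖
        ≤ (w x)⁻¹ * (2 * (pbias x₀ * k x x₀ * w x *
            ‖s₁ x - gradient (fun y => Real.log (k y x₀)) x
              - gradient (fun y => Real.log (w y)) x‖ ^ 2))
          + 2 * ((pbias x₀ * k x x₀) * ‖s₁ x - gradient (fun y => Real.log (w y)) x‖ ^ 2) := by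
      intro x₀
      have hkp := hk_pos x₀ x
      have hpb := (hpbias_pos x₀).le
      have hwp := hw_pos x
      rw [hk_log x x₀]
      set N := ‖gradient (fun y => k y x₀) x‖ with hN
      set A := ‖s₁ x - gradient (fun y => Real.log (w y)) x‖ with hA
      set Bv := ‖s₁ x - (k x x₀)⁻¹ • gradient (fun y => k y x₀) x
          - gradient (fun y => Real.log (w y)) x‖ with hBv
      have hN0 : 0 ≤ N := norm_nonneg _
      have hA0 : 0 ≤ A := norm_nonneg _
      have hB0 : 0 ≤ Bv := norm_nonneg _
      set m := (k x x₀)⁻¹ * N with hm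
      have hm0 : 0 ≤ m := mul_nonneg (inv_pos.mpr hkp).le hN0
      have h5 : (k x x₀)⁻¹ • gradient (fun y => k y x₀) x
          = (s₁ x - gradient (fun y => Real.log (w y)) x)
            - (s₁ x - (k x x₀)⁻¹ • gradient (fun y => k y x₀) x
                - gradient (fun y => Real.log (w y)) x) := by abel
      have h6 : m ≤ A + Bv := by
        have e : m = ‖(k x x₀)⁻¹ • gradient (fun y => k y x₀) x‖ := by
          rw [norm_smul, Real.norm_eq_abs, abs_of_pos (inv_pos.mpr hkp)]
        rw [e, h5]
        exact norm_sub_le _ _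
      have hdivm : N ^ 2 / k x x₀ = k x x₀ * m ^ 2 := by
        rw [hm]; field_simp
      have hginv : (w x)⁻¹ * (2 * (pbias x₀ * k x x₀ * w x * Bv ^ 2))
          = 2 * (pbias x₀ * k x x₀ * Bv ^ 2) := by
        field_simp
      rw [Real.norm_eq_abs, abs_of_nonneg (by positivity), hdivm, hginv]
      have hmsq : m ^ 2 ≤ 2 * Bv ^ 2 + 2 * A ^ 2 := by nlinarith [sq_nonneg (A - Bv)]
      nlinarith [mul_nonneg (mul_nonneg hpb hkp.le) (sub_nonneg.mpr hmsq)]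
    have int_gradk_sq : Integrable (fun x₀ =>
        pbias x₀ * (‖gradient (fun y => k y x₀) x‖ ^ 2 / k x x₀)) :=
      Integrable.mono'
        (((h1.const_mul 2).const_mul ((w x)⁻¹)).add (((IntK x).mul_const _).const_mul 2))
        ((hpbias_meas.mul (((measG x).norm.pow_const 2).div (measK x))).aestronglyMeasurable)
        (Filter.Eventually.of_forall hbound1)
    have hbound2 : ∀ x₀, ‖pbias x₀ • gradient (fun y => k y x₀) x‖
        ≤ pbias x₀ * k x x₀ + pbias x₀ * (‖gradient (fun y => k y x₀) x‖ ^ 2 / k x x₀) := by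
      intro x₀
      have hkp := hk_pos x₀ x
      have hpb := (hpbias_pos x₀).le
      set N := ‖gradient (fun y => k y x₀) x‖ with hN
      have hN0 : 0 ≤ N := norm_nonneg _
      have h8 : N ≤ k x x₀ + N ^ 2 / k x x₀ := by
        rw [← mul_le_mul_iff_left₀ hkp]
        have e : (k x x₀ + N ^ 2 / k x x₀) * k x x₀ = k x x₀ ^ 2 + N ^ 2 := by
          field_simp
        rw [e]
        nlinarith [sq_nonneg (k x x₀ - N)]
      calc ‖pbias x₀ • gradient (fun y => k y x₀) x‖ = pbias x₀ * N := by
            rw [norm_smul, Real.norm_eq_abs, abs_of_nonneg hpb]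
        _ ≤ pbias x₀ * (k x x₀ + N ^ 2 / k x x₀) := mul_le_mul_of_nonneg_left h8 hpb
        _ = pbias x₀ * k x x₀ + pbias x₀ * (N ^ 2 / k x x₀) := by ring
    have int_gvec : Integrable (fun x₀ => pbias x₀ • gradient (fun y => k y x₀) x) :=
      Integrable.mono' ((IntK x).add int_gradk_sq)
        ((hpbias_meas.smul (measG x)).aestronglyMeasurable)
        (Filter.Eventually.of_forall hbound2)
    have int_inner : Integrable (fun x₀ =>
        pbias x₀ * (inner ℝ (s₁ x - s₂ x) (gradient (fun y => k y x₀) x) : ℝ)) := by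
      have h9 := int_gvec.const_inner (𝕜 := ℝ) (s₁ x - s₂ x)
      simpa only [real_inner_smul_right] using h9
    have val_inner : ∫ x₀,
        pbias x₀ * (inner ℝ (s₁ x - s₂ x) (gradient (fun y => k y x₀) x) : ℝ)
        = (inner ℝ (s₁ x - s₂ x) (gradient q x) : ℝ) := by
      rw [hq_grad x, ← integral_inner int_gvec (s₁ x - s₂ x)]
      simp only [real_inner_smul_right]
    calc (∫ x₀,
        (pbias x₀ * k x x₀ * w x *
          ‖s₁ x - gradient (fun y => Real.log (k y x₀)) x
            - gradient (fun y => Real.log (w y)) x‖ ^ 2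
        - pbias x₀ * k x x₀ * w x *
          ‖s₂ x - gradient (fun y => Real.log (k y x₀)) x
            - gradient (fun y => Real.log (w y)) x‖ ^ 2))
        = ∫ x₀, ((pbias x₀ * k x x₀) * (w x *
            (‖s₁ x - gradient (fun y => Real.log (w y)) x‖ ^ 2
              - ‖s₂ x - gradient (fun y => Real.log (w y)) x‖ ^ 2))
          - (2 * w x) * (pbias x₀ *
              (inner ℝ (s₁ x - s₂ x) (gradient (fun y => k y x₀) x) : ℝ))) := by
          congr 1; funext x₀; exact step1 x₀
      _ = (∫ x₀, (pbias x₀ * k x x₀)) * (w x *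
            (‖s₁ x - gradient (fun y => Real.log (w y)) x‖ ^ 2
              - ‖s₂ x - gradient (fun y => Real.log (w y)) x‖ ^ 2))
          - (2 * w x) * ∫ x₀, pbias x₀ *
              (inner ℝ (s₁ x - s₂ x) (gradient (fun y => k y x₀) x) : ℝ) := by
          rw [integral_sub ((IntK x).mul_const _) (int_inner.const_mul _),
            integral_mul_const, integral_const_mul]
      _ = q x * (w x *
            (‖s₁ x - gradient (fun y => Real.log (w y)) x‖ ^ 2
              - ‖s₂ x - gradient (fun y => Real.log (w y)) x‖ ^ 2))
          - (2 * w x) * (inner ℝ (s₁ x - s₂ x) (gradient q x) : ℝ) := by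
          rw [← hq_def x, val_inner]
      _ = r x * ‖s₁ x - gradient (fun y => Real.log (r y)) x‖ ^ 2
          - r x * ‖s₂ x - gradient (fun y => Real.log (r y)) x‖ ^ 2 := by
          rw [hr_log x, hgr x, hw_log x, hrqw x]
          exact (alg2' (s₁ x) (s₂ x) (gradient q x) (gradient w x) (q x) (w x)
            (hq0 x) (hw0 x)).symm
  have hswap₁ : ∫ x₀, ∫ x, pbias x₀ * k x x₀ * w x *
        ‖s₁ x - gradient (fun y => Real.log (k y x₀)) x
          - gradient (fun y => Real.log (w y)) x‖ ^ 2
      = ∫ x, ∫ x₀, pbias x₀ * k x x₀ * w x *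
        ‖s₁ x - gradient (fun y => Real.log (k y x₀)) x
          - gradient (fun y => Real.log (w y)) x‖ ^ 2 :=
    (integral_integral_swap hprod₁).symm
  have hswap₂ : ∫ x₀, ∫ x, pbias x₀ * k x x₀ * w x *
        ‖s₂ x - gradient (fun y => Real.log (k y x₀)) x
          - gradient (fun y => Real.log (w y)) x‖ ^ 2
      = ∫ x, ∫ x₀, pbias x₀ * k x x₀ * w x *
        ‖s₂ x - gradient (fun y => Real.log (k y x₀)) x
          - gradient (fun y => Real.log (w y)) x‖ ^ 2 :=
    (integral_integral_swap hprod₂).symm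
  rw [hswap₁, hswap₂, ← integral_sub (hprod₁.integral_prod_left) (hprod₂.integral_prod_left),
    ← integral_sub hint_sm₁ hint_sm₂]
  refine (integral_congr_ae ?_).symm
  calc (fun x => (∫ x₀, pbias x₀ * k x x₀ * w x *
        ‖s₁ x - gradient (fun y => Real.log (k y x₀)) x
          - gradient (fun y => Real.log (w y)) x‖ ^ 2)
      - ∫ x₀, pbias x₀ * k x x₀ * w x *
        ‖s₂ x - gradient (fun y => Real.log (k y x₀)) x
          - gradient (fun y => Real.log (w y)) x‖ ^ 2)
      =ᵐ[(volume : Measure (EuclideanSpace ℝ (Fin d)))] (fun x => ∫ x₀,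
        (pbias x₀ * k x x₀ * w x *
          ‖s₁ x - gradient (fun y => Real.log (k y x₀)) x
            - gradient (fun y => Real.log (w y)) x‖ ^ 2
        - pbias x₀ * k x x₀ * w x *
          ‖s₂ x - gradient (fun y => Real.log (k y x₀)) x
            - gradient (fun y => Real.log (w y)) x‖ ^ 2)) := by
        filter_upwards [hprod₁.prod_right_ae, hprod₂.prod_right_ae] with x h1 h2
        exact (integral_sub h1 h2).symm
    _ =ᵐ[(volume : Measure (EuclideanSpace ℝ (Fin d)))]
      (fun x => r x * ‖s₁ x - gradient (fun y => Real.log (r y)) x‖ ^ 2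
        - r x * ‖s₂ x - gradient (fun y => Real.log (r y)) x‖ ^ 2) := key



/-- **Theorem 1 (TIW-DSM equals score matching up to a constant)** from
"Training Unbiased Diffusion Models From Biased Dataset".
For every pair of measurable time-dependent vector fields `s₁, s₂` with all
integrals finite, the time-dependent importance-reweighted denoising
score-matching objective `L_TIW-DSM(s; p_bias, w_t)` and the score-matching
objective `L_SM(s; p_data)` differ by a constant not depending on the field:
their differences at `s₁` and `s₂` coincide. -/
theorem tiw_dsm_eq_sm_up_to_const
    {d : ℕ} (hd : 1 ≤ d)
    -- time horizon and temporal weighting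
    (T : ℝ) (hT : 0 < T)
    (lam : ℝ → ℝ) (hlam_meas : Measurable lam)
    (hlam_nonneg : ∀ t ∈ Set.Ioc 0 T, 0 ≤ lam t)
    -- the strictly positive probability densities p_bias and p_data
    (pbias pdata : EuclideanSpace ℝ (Fin d) → ℝ)
    (hpbias_meas : Measurable pbias) (hpbias_pos : ∀ x₀, 0 < pbias x₀)
    (hpbias_prob : ∫ x₀, pbias x₀ = 1)
    (hpdata_meas : Measurable pdata) (hpdata_pos : ∀ x₀, 0 < pdata x₀)
    (hpdata_prob : ∫ x₀, pdata x₀ = 1)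
    -- the time-indexed transition kernels k_t, t ∈ (0, T]
    (k : ℝ → EuclideanSpace ℝ (Fin d) → EuclideanSpace ℝ (Fin d) → ℝ)
    (hk_meas : ∀ t ∈ Set.Ioc 0 T, Measurable (Function.uncurry (k t)))
    (hk_pos : ∀ t ∈ Set.Ioc 0 T, ∀ x₀ x, 0 < k t x x₀)
    (hk_prob : ∀ t ∈ Set.Ioc 0 T, ∀ x₀, ∫ x, k t x x₀ = 1)
    (hk_smooth : ∀ t ∈ Set.Ioc 0 T, ∀ x₀, ContDiff ℝ 1 fun x => k t x x₀)
    -- the perturbed marginals q_t (of p_bias) and r_t (of p_data): strictly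
    -- positive, differentiable, with differentiation under the integral sign
    (q r : ℝ → EuclideanSpace ℝ (Fin d) → ℝ)
    (hq_def : ∀ t ∈ Set.Ioc 0 T, ∀ x, q t x = ∫ x₀, pbias x₀ * k t x x₀)
    (hq_pos : ∀ t ∈ Set.Ioc 0 T, ∀ x, 0 < q t x)
    (hq_diff : ∀ t ∈ Set.Ioc 0 T, Differentiable ℝ (q t))
    (hq_grad : ∀ t ∈ Set.Ioc 0 T, ∀ x,
      gradient (q t) x = ∫ x₀, pbias x₀ • gradient (fun y => k t y x₀) x)
    (hr_def : ∀ t ∈ Set.Ioc 0 T, ∀ x, r t x = ∫ x₀, pdata x₀ * k t x x₀)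
    (hr_pos : ∀ t ∈ Set.Ioc 0 T, ∀ x, 0 < r t x)
    (hr_diff : ∀ t ∈ Set.Ioc 0 T, Differentiable ℝ (r t))
    (hr_grad : ∀ t ∈ Set.Ioc 0 T, ∀ x,
      gradient (r t) x = ∫ x₀, pdata x₀ • gradient (fun y => k t y x₀) x)
    -- the time-dependent density ratio w_t = r_t / q_t
    (w : ℝ → EuclideanSpace ℝ (Fin d) → ℝ)
    (hw_def : ∀ t ∈ Set.Ioc 0 T, ∀ x, w t x = r t x / q t x)
    -- the two time-dependent vector fields
    (s₁ s₂ : ℝ → EuclideanSpace ℝ (Fin d) → EuclideanSpace ℝ (Fin d))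
    (hs₁_meas : Measurable fun p : ℝ × EuclideanSpace ℝ (Fin d) => s₁ p.1 p.2)
    (hs₂_meas : Measurable fun p : ℝ × EuclideanSpace ℝ (Fin d) => s₂ p.1 p.2)
    -- all integrals below are assumed finite
    (hint_sm₁ : ∀ t ∈ Set.Ioc 0 T, Integrable fun x =>
      r t x * ‖s₁ t x - gradient (fun y => Real.log (r t y)) x‖ ^ 2)
    (hint_sm₂ : ∀ t ∈ Set.Ioc 0 T, Integrable fun x =>
      r t x * ‖s₂ t x - gradient (fun y => Real.log (r t y)) x‖ ^ 2)
    (hint_dsm₁ : ∀ t ∈ Set.Ioc 0 T,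
      Integrable fun p : EuclideanSpace ℝ (Fin d) × EuclideanSpace ℝ (Fin d) =>
        pbias p.2 * k t p.1 p.2 * w t p.1 *
          ‖s₁ t p.1 - gradient (fun y => Real.log (k t y p.2)) p.1
            - gradient (fun y => Real.log (w t y)) p.1‖ ^ 2)
    (hint_dsm₂ : ∀ t ∈ Set.Ioc 0 T,
      Integrable fun p : EuclideanSpace ℝ (Fin d) × EuclideanSpace ℝ (Fin d) =>
        pbias p.2 * k t p.1 p.2 * w t p.1 *
          ‖s₂ t p.1 - gradient (fun y => Real.log (k t y p.2)) p.1
            - gradient (fun y => Real.log (w t y)) p.1‖ ^ 2)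
    (hint_t_sm₁ : IntegrableOn (fun t => lam t *
      ∫ x, r t x * ‖s₁ t x - gradient (fun y => Real.log (r t y)) x‖ ^ 2)
      (Set.Ioc 0 T))
    (hint_t_sm₂ : IntegrableOn (fun t => lam t *
      ∫ x, r t x * ‖s₂ t x - gradient (fun y => Real.log (r t y)) x‖ ^ 2)
      (Set.Ioc 0 T))
    (hint_t_dsm₁ : IntegrableOn (fun t => lam t *
      ∫ x₀, ∫ x, pbias x₀ * k t x x₀ * w t x *
        ‖s₁ t x - gradient (fun y => Real.log (k t y x₀)) x
          - gradient (fun y => Real.log (w t y)) x‖ ^ 2) (Set.Ioc 0 T))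
    (hint_t_dsm₂ : IntegrableOn (fun t => lam t *
      ∫ x₀, ∫ x, pbias x₀ * k t x x₀ * w t x *
        ‖s₂ t x - gradient (fun y => Real.log (k t y x₀)) x
          - gradient (fun y => Real.log (w t y)) x‖ ^ 2) (Set.Ioc 0 T)) :
    (1 / 2) * (∫ t in Set.Ioc 0 T, lam t *
        ∫ x, r t x * ‖s₁ t x - gradient (fun y => Real.log (r t y)) x‖ ^ 2)
      - (1 / 2) * (∫ t in Set.Ioc 0 T, lam t *
        ∫ x, r t x * ‖s₂ t x - gradient (fun y => Real.log (r t y)) x‖ ^ 2)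
    = (1 / 2) * (∫ t in Set.Ioc 0 T, lam t *
        ∫ x₀, ∫ x, pbias x₀ * k t x x₀ * w t x *
          ‖s₁ t x - gradient (fun y => Real.log (k t y x₀)) x
            - gradient (fun y => Real.log (w t y)) x‖ ^ 2)
      - (1 / 2) * (∫ t in Set.Ioc 0 T, lam t *
        ∫ x₀, ∫ x, pbias x₀ * k t x x₀ * w t x *
          ‖s₂ t x - gradient (fun y => Real.log (k t y x₀)) x
            - gradient (fun y => Real.log (w t y)) x‖ ^ 2) := by
  have key_t : ∀ t ∈ Set.Ioc (0:ℝ) T,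
      (∫ x, r t x * ‖s₁ t x - gradient (fun y => Real.log (r t y)) x‖ ^ 2)
        - (∫ x, r t x * ‖s₂ t x - gradient (fun y => Real.log (r t y)) x‖ ^ 2)
      = (∫ x₀, ∫ x, pbias x₀ * k t x x₀ * w t x *
          ‖s₁ t x - gradient (fun y => Real.log (k t y x₀)) x
            - gradient (fun y => Real.log (w t y)) x‖ ^ 2)
        - (∫ x₀, ∫ x, pbias x₀ * k t x x₀ * w t x *
          ‖s₂ t x - gradient (fun y => Real.log (k t y x₀)) x
            - gradient (fun y => Real.log (w t y)) x‖ ^ 2) := by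
    intro t ht
    exact tiw_key pbias hpbias_meas hpbias_pos (k t) (hk_meas t ht) (hk_pos t ht)
      (hk_smooth t ht) (q t) (r t) (hq_def t ht) (hq_pos t ht) (hq_diff t ht) (hq_grad t ht)
      (hr_pos t ht) (hr_diff t ht) (w t) (hw_def t ht) (s₁ t) (s₂ t)
      (hint_sm₁ t ht) (hint_sm₂ t ht) (hint_dsm₁ t ht) (hint_dsm₂ t ht)
  have main : (∫ t in Set.Ioc (0:ℝ) T, lam t *
        ∫ x, r t x * ‖s₁ t x - gradient (fun y => Real.log (r t y)) x‖ ^ 2)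
      - (∫ t in Set.Ioc (0:ℝ) T, lam t *
        ∫ x, r t x * ‖s₂ t x - gradient (fun y => Real.log (r t y)) x‖ ^ 2)
      = (∫ t in Set.Ioc (0:ℝ) T, lam t *
        ∫ x₀, ∫ x, pbias x₀ * k t x x₀ * w t x *
          ‖s₁ t x - gradient (fun y => Real.log (k t y x₀)) x
            - gradient (fun y => Real.log (w t y)) x‖ ^ 2)
      - (∫ t in Set.Ioc (0:ℝ) T, lam t *
        ∫ x₀, ∫ x, pbias x₀ * k t x x₀ * w t x *
          ‖s₂ t x - gradient (fun y => Real.log (k t y x₀)) x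
            - gradient (fun y => Real.log (w t y)) x‖ ^ 2) := by
    rw [← integral_sub hint_t_sm₁ hint_t_sm₂, ← integral_sub hint_t_dsm₁ hint_t_dsm₂]
    refine setIntegral_congr_fun measurableSet_Ioc fun t ht => ?_
    have h := key_t t ht
    rw [← mul_sub, ← mul_sub, h]
  linarith [main]
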